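/- If (A), (B) and (C) hold, then L equipped with b' := ⋁{a_s : b ≤ a_s'} is a complete, atomistic, orthocomplemented lattice (b ≤ c ⇒ c' ≤ b', b'' = b, b ∧ b' = 0, b ∨ b' = I). -/
import Mathlib


universe u v

/-- A state property system: states, a complete lattice of properties, and
the actuality map `xi` assigning to each state the set of actual properties. -/
structure SPS (σ : Type u) (L : Type v) [CompleteLattice L] where
  xi : σ → Set L
  top_mem : ∀ p, ⊤ ∈ xi p
  bot_not_mem : ∀ p, ⊥ ∉ xi p
  sInf_mem : ∀ (p : σ) (A : Set L), (∀ a ∈ A, a ∈ xi p) ↔ sInf A ∈ xi p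
  le_iff : ∀ a b : L, a ≤ b ↔ ∀ r, a ∈ xi r → b ∈ xi r

variable {σ : Type u} {L : Type v} [CompleteLattice L]

/-- λ{p,q} : the set of superpositions of the pair p, q. -/
def SPS.lamPair (S : SPS σ L) (p q : σ) : Set σ := {s | S.xi p ∩ S.xi q ⊆ S.xi s}

/-- A set is λ-closed if it contains λ{p,q} for each pair of its points. -/
def SPS.lamClosed (S : SPS σ L) (T : Set σ) : Prop :=
  ∀ p ∈ T, ∀ q ∈ T, S.lamPair p q ⊆ T

/-- λ(P) : the intersection of all λ-closed sets containing P. -/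
def SPS.lam (S : SPS σ L) (P : Set σ) : Set σ :=
  ⋂₀ {G | S.lamClosed G ∧ P ⊆ G}

/-- The set of superpositions of a set of states. -/
def SPS.bar (S : SPS σ L) (T : Set σ) : Set σ :=
  {p | (⋂ s ∈ T, S.xi s) ⊆ S.xi p}

/-- Property (A): at least two states and `xi` order-reflecting (injective). -/
def SPS.propA (S : SPS σ L) : Prop :=
  (∃ p q : σ, p ≠ q) ∧ ∀ p q : σ, S.xi p ⊆ S.xi q → p = q

/-- p is a minimal superposition of A. -/
def SPS.minSup (S : SPS σ L) (A : Set σ) (p : σ) : Prop :=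
  p ∈ S.bar A ∧ ∀ Q : Set σ, Q ⊂ A → p ∉ S.bar Q

/-- The minimal superposition principle for a given set A. -/
def SPS.MSPon (S : SPS σ L) (A : Set σ) : Prop :=
  ∀ p : σ, S.minSup A p →
    ∀ S₁ S₂ : Set σ, S₁ ⊂ A → S₂ ⊂ A → S₁ ∩ S₂ = ∅ → S₁ ∪ S₂ = A →
      (S.bar (S₁ ∪ {p}) ∩ S.bar S₂).Nonempty

/-- n-MSP : MSP for all sets of cardinality at most n. -/
def SPS.nMSP (S : SPS σ L) (n : ℕ) : Prop :=
  ∀ A : Set σ, A.Finite → A.ncard ≤ n → S.MSPon A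

/-- f-MSP : MSP for all finite sets. -/
def SPS.fMSP (S : SPS σ L) : Prop := ∀ A : Set σ, A.Finite → S.MSPon A

/-- Probability structure on a subset `L0` of the property lattice:
`mu p a` is the probability of property `a` in state `p`, satisfying (Oi)-(Oiii). -/
structure ProbStruct (S : SPS σ L) (L0 : Set L) where
  bot_mem : (⊥ : L) ∈ L0
  top_mem : (⊤ : L) ∈ L0
  mu : σ → L → ℝ
  nonneg : ∀ p, ∀ a ∈ L0, 0 ≤ mu p a
  le_one : ∀ p, ∀ a ∈ L0, mu p a ≤ 1
  Oi : ∀ p, ∀ a ∈ L0, (mu p a = 1 ↔ a ∈ S.xi p)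
  Oii : ∀ p, ∀ a ∈ L0, ∀ b ∈ L0, a ≤ b → mu p a ≤ mu p b
  Oiii : ∀ a : ℕ → L, (∀ i, a i ∈ L0) →
    (∀ i j, i ≠ j → ∀ p, mu p (a i) + mu p (a j) ≤ 1) →
    ∃ b ∈ L0, ∀ p, HasSum (fun i => mu p (a i)) (1 - mu p b)

/-- `oc` is the orthocomplementation on `L0` associated with the probability structure. -/
def ocProp (S : SPS σ L) (L0 : Set L) (P : ProbStruct S L0) (oc : L → L) : Prop :=
  ∀ a ∈ L0, oc a ∈ L0 ∧ ∀ p, P.mu p a + P.mu p (oc a) = 1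

/-- The atom associated to a state: the smallest actual property. -/
def atomOf (S : SPS σ L) (p : σ) : L := sInf (S.xi p)

/-- The orthocomplementation extended to all of L: b' = ⋁{a_s : b ≤ (a_s)'}. -/
def negL (S : SPS σ L) (oc : L → L) (b : L) : L :=
  sSup {a | ∃ s : σ, a = atomOf S s ∧ b ≤ oc (atomOf S s)}


-- Auxiliary lemmas

lemma sps_atom_mem (S : SPS σ L) (p : σ) : atomOf S p ∈ S.xi p :=
  (S.sInf_mem p (S.xi p)).mp (fun _ ha => ha)

lemma sps_mem_iff (S : SPS σ L) (p : σ) (x : L) : x ∈ S.xi p ↔ atomOf S p ≤ x := by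
  constructor
  · exact fun h => sInf_le h
  · intro h
    exact (S.le_iff _ _).mp h p (sps_atom_mem S p)

lemma sps_le_iff_atoms (S : SPS σ L) (b x : L) :
    b ≤ x ↔ ∀ t, atomOf S t ≤ b → atomOf S t ≤ x := by
  rw [S.le_iff]
  constructor
  · intro h t ht
    exact (sps_mem_iff S t x).mp (h t ((sps_mem_iff S t b).mpr ht))
  · intro h r hr
    exact (sps_mem_iff S r x).mpr (h r ((sps_mem_iff S r b).mp hr))

lemma sps_oc_oc (S : SPS σ L) (L0 : Set L) (P : ProbStruct S L0)
    (oc : L → L) (hoc : ocProp S L0 P oc) {a : L} (ha : a ∈ L0) :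
    oc (oc a) = a := by
  have h1 := hoc a ha
  have h2 := hoc (oc a) h1.1
  have key : ∀ p, (oc (oc a) ∈ S.xi p ↔ a ∈ S.xi p) := by
    intro p
    rw [← P.Oi p _ h2.1, ← P.Oi p a ha]
    have e1 := h1.2 p
    have e2 := h2.2 p
    constructor <;> intro h <;> linarith
  exact le_antisymm ((S.le_iff _ _).mpr fun r hr => (key r).mp hr)
    ((S.le_iff _ _).mpr fun r hr => (key r).mpr hr)

lemma sps_oc_antitone (S : SPS σ L) (L0 : Set L) (P : ProbStruct S L0)
    (oc : L → L) (hoc : ocProp S L0 P oc) {a b : L} (ha : a ∈ L0) (hb : b ∈ L0)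
    (hab : a ≤ b) : oc b ≤ oc a := by
  rw [S.le_iff]
  intro p hp
  have mb : P.mu p (oc b) = 1 := (P.Oi p _ (hoc b hb).1).mpr hp
  have h1 := (hoc a ha).2 p
  have h2 := (hoc b hb).2 p
  have h3 := P.Oii p a ha b hb hab
  have h4 := P.le_one p (oc a) (hoc a ha).1
  have : P.mu p (oc a) = 1 := by linarith
  exact (P.Oi p _ (hoc a ha).1).mp this

lemma sps_not_atom_le_oc (S : SPS σ L) (L0 : Set L) (P : ProbStruct S L0)
    (oc : L → L) (hoc : ocProp S L0 P oc) (hB : ∀ s : σ, atomOf S s ∈ L0)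
    (s : σ) : ¬ atomOf S s ≤ oc (atomOf S s) := by
  intro h
  have h1 : P.mu s (atomOf S s) = 1 := (P.Oi s _ (hB s)).mpr (sps_atom_mem S s)
  have h2 : P.mu s (oc (atomOf S s)) = 1 :=
    (P.Oi s _ (hoc _ (hB s)).1).mpr ((sps_mem_iff S s _).mpr h)
  have h3 := (hoc _ (hB s)).2 s
  linarith

lemma sps_orth_sym (S : SPS σ L) (L0 : Set L) (P : ProbStruct S L0)
    (oc : L → L) (hoc : ocProp S L0 P oc) (hB : ∀ s : σ, atomOf S s ∈ L0)
    (s t : σ) (h : atomOf S t ≤ oc (atomOf S s)) :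
    atomOf S s ≤ oc (atomOf S t) := by
  have h1 : oc (oc (atomOf S s)) ≤ oc (atomOf S t) :=
    sps_oc_antitone S L0 P oc hoc (hB t) (hoc _ (hB s)).1 h
  rwa [sps_oc_oc S L0 P oc hoc (hB s)] at h1

lemma sps_atoms_eq (S : SPS σ L) (hA : S.propA) {s t : σ}
    (h : atomOf S t ≤ atomOf S s) : atomOf S t = atomOf S s := by
  have hst : s = t := hA.2 s t (fun b hb =>
    (sps_mem_iff S t b).mpr (h.trans ((sps_mem_iff S s b).mp hb)))
  rw [hst]

lemma sps_isAtom (S : SPS σ L) (hA : S.propA) (s : σ) : IsAtom (atomOf S s) := by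
  constructor
  · intro h
    exact S.bot_not_mem s (h ▸ sps_atom_mem S s)
  · intro x hx
    by_contra hbot
    have hnb : ¬ x ≤ ⊥ := fun h => hbot (le_bot_iff.mp h)
    rw [sps_le_iff_atoms S] at hnb
    push_neg at hnb
    obtain ⟨t, htx, -⟩ := hnb
    have heq := sps_atoms_eq S hA (htx.trans hx.le)
    exact absurd (heq ▸ htx) (not_le_of_gt hx)

theorem stmt13 (S : SPS σ L) (L0 : Set L) (P : ProbStruct S L0)
    (oc : L → L) (hoc : ocProp S L0 P oc)
    (hA : S.propA)
    (hB : ∀ s : σ, atomOf S s ∈ L0)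
    (hC : ∀ b : L, b = sInf {x | ∃ s : σ, x = oc (atomOf S s) ∧ b ≤ x}) :
    -- L with b ↦ b' is an orthocomplemented lattice
    (∀ b c : L, b ≤ c → negL S oc c ≤ negL S oc b) ∧
    (∀ b : L, negL S oc (negL S oc b) = b) ∧
    (∀ b : L, b ⊓ negL S oc b = ⊥) ∧
    (∀ b : L, b ⊔ negL S oc b = ⊤) ∧
    -- and L is atomistic
    (∀ b : L, b = sSup {a : L | IsAtom a ∧ a ≤ b}) := by
  have gen_le : ∀ b : L, ∀ s : σ, b ≤ oc (atomOf S s) → atomOf S s ≤ negL S oc b :=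
    fun b s h => le_sSup ⟨s, rfl, h⟩
  have neg_le : ∀ b x : L, (∀ s : σ, b ≤ oc (atomOf S s) → atomOf S s ≤ x) →
      negL S oc b ≤ x := by
    intro b x h
    apply sSup_le
    rintro y ⟨s, rfl, hs⟩
    exact h s hs
  refine ⟨?_, ?_, ?_, ?_, ?_⟩
  · -- antitone
    intro b c hbc
    apply sSup_le_sSup
    rintro x ⟨s, rfl, hs⟩
    exact ⟨s, rfl, hbc.trans hs⟩
  · -- involution
    intro b
    apply le_antisymm
    · conv_rhs => rw [hC b]
      apply le_sInf
      rintro x ⟨r, rfl, hbr⟩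
      apply neg_le
      intro q hq
      exact sps_orth_sym S L0 P oc hoc hB q r ((gen_le b r hbr).trans hq)
    · rw [sps_le_iff_atoms S]
      intro t ht
      apply gen_le
      apply neg_le
      intro p hp
      exact sps_orth_sym S L0 P oc hoc hB p t (ht.trans hp)
  · -- b ⊓ b' = ⊥
    intro b
    apply le_antisymm _ bot_le
    rw [sps_le_iff_atoms S]
    intro t ht
    exfalso
    have h1 : atomOf S t ≤ b := ht.trans inf_le_left
    have h2 : atomOf S t ≤ negL S oc b := ht.trans inf_le_right
    have h3 : negL S oc b ≤ oc (atomOf S t) :=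
      neg_le b _ (fun p hp => sps_orth_sym S L0 P oc hoc hB p t (h1.trans hp))
    exact sps_not_atom_le_oc S L0 P oc hoc hB t (h2.trans h3)
  · -- b ⊔ b' = ⊤
    intro b
    have hempty : {x | ∃ s : σ, x = oc (atomOf S s) ∧ b ⊔ negL S oc b ≤ x} = ∅ := by
      ext x
      simp only [Set.mem_setOf_eq, Set.mem_empty_iff_false, iff_false, not_exists]
      rintro s ⟨rfl, hle⟩
      have h1 : atomOf S s ≤ negL S oc b := gen_le b s (le_sup_left.trans hle)
      exact sps_not_atom_le_oc S L0 P oc hoc hB s (h1.trans (le_sup_right.trans hle))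
    conv_lhs => rw [hC (b ⊔ negL S oc b)]
    rw [hempty, sInf_empty]
  · -- atomistic
    intro b
    apply le_antisymm
    · rw [sps_le_iff_atoms S]
      intro t ht
      exact le_sSup ⟨sps_isAtom S hA t, ht⟩
    · exact sSup_le (fun x hx => hx.2)
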